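/- arXiv:2101.08712 — 3 statements merged into one kernel-verified Lean document; each statement's English description precedes it below -/
import Mathlib

section
/- Let n ≥ 1 and let p_0, p_1, …, p_n ∈ ℝ² be the vertices of a closed polygonal chain with p_n = p_0, with signed (shoelace) area A, and let R(x, y) = (y, −x). Then for every affine map v : ℝ² → ℝ² with linear part B (i.e. v(x) = v_0 + B x), one has ∑_{i=0}^{n−1} v((p_i + p_{i+1})/2) ⊗ R(p_{i+1} − p_i) = A · B. In particular, if A ≠ 0, the discrete gradient reconstruction (1/A) ∑_{i=0}^{n−1} v(edge midpoint) ⊗ R(edge vector) recovers exactly the gradient B of any affine displacement field on the polygonal cell. -/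
open scoped BigOperators Matrix

noncomputable section

/-- Outer product `u ⊗ w` of two vectors of `ℝ²`. -/
def outer2 (u w : Fin 2 → ℝ) : Matrix (Fin 2) (Fin 2) ℝ := fun i j => u i * w j

/-- The linear rotation `R(x, y) = (y, −x)`. -/
def rot2 (w : Fin 2 → ℝ) : Fin 2 → ℝ := ![w 1, -(w 0)]

theorem polygon_gradient_reconstruction_exact_on_affine (n : ℕ) (hn : 1 ≤ n)
    (p : ℕ → Fin 2 → ℝ) (hp : p n = p 0) (A : ℝ)
    (hA : A = (1 / 2 : ℝ) * ∑ i ∈ Finset.range n,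
      (p i 0 * p (i + 1) 1 - p (i + 1) 0 * p i 1))
    (v : (Fin 2 → ℝ) → (Fin 2 → ℝ)) (v0 : Fin 2 → ℝ) (B : Matrix (Fin 2) (Fin 2) ℝ)
    (hv : ∀ x, v x = v0 + B.mulVec x) :
    (∑ i ∈ Finset.range n,
        outer2 (v ((1 / 2 : ℝ) • (p i + p (i + 1)))) (rot2 (p (i + 1) - p i))) = A • B ∧
    (A ≠ 0 →
      (1 / A) • (∑ i ∈ Finset.range n,
          outer2 (v ((1 / 2 : ℝ) • (p i + p (i + 1)))) (rot2 (p (i + 1) - p i))) = B) := by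
  have t0 : ∑ i ∈ Finset.range n, (p (i + 1) 0 - p i 0) = 0 := by
    rw [Finset.sum_range_sub (fun i => p i 0), hp]; ring
  have t1 : ∑ i ∈ Finset.range n, (p (i + 1) 1 - p i 1) = 0 := by
    rw [Finset.sum_range_sub (fun i => p i 1), hp]; ring
  have s00 : ∑ i ∈ Finset.range n, (p (i + 1) 0 * p (i + 1) 0 - p i 0 * p i 0) = 0 := by
    rw [Finset.sum_range_sub (fun i => p i 0 * p i 0), hp]; ring
  have s11 : ∑ i ∈ Finset.range n, (p (i + 1) 1 * p (i + 1) 1 - p i 1 * p i 1) = 0 := by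
    rw [Finset.sum_range_sub (fun i => p i 1 * p i 1), hp]; ring
  have sxy : ∑ i ∈ Finset.range n, (p (i + 1) 0 * p (i + 1) 1 - p i 0 * p i 1) = 0 := by
    rw [Finset.sum_range_sub (fun i => p i 0 * p i 1), hp]; ring
  have hsh : ∑ i ∈ Finset.range n, (p i 0 * p (i + 1) 1 - p (i + 1) 0 * p i 1) = 2 * A := by
    rw [hA]; ring
  have key : (∑ i ∈ Finset.range n,
      outer2 (v ((1 / 2 : ℝ) • (p i + p (i + 1)))) (rot2 (p (i + 1) - p i))) = A • B := by
    ext a b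
    rw [Matrix.sum_apply]
    simp only [outer2, rot2, hv, Matrix.mulVec, dotProduct, Fin.sum_univ_two,
      Pi.add_apply, Pi.smul_apply, Pi.sub_apply, smul_eq_mul, Matrix.smul_apply]
    fin_cases b <;>
      simp only [Fin.zero_eta, Fin.mk_one, Matrix.cons_val_zero, Matrix.cons_val_one,
        Matrix.head_cons]
    · have expand : ∀ i ∈ Finset.range n,
        (v0 a + (B a 0 * ((1/2 : ℝ) * (p i 0 + p (i+1) 0)) + B a 1 * ((1/2 : ℝ) * (p i 1 + p (i+1) 1)))) *
          (p (i+1) 1 - p i 1)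
        = v0 a * (p (i+1) 1 - p i 1)
          + B a 0 * ((1/2 : ℝ) * ((p i 0 * p (i+1) 1 - p (i+1) 0 * p i 1)
              + (p (i+1) 0 * p (i+1) 1 - p i 0 * p i 1)))
          + B a 1 * ((1/2 : ℝ) * (p (i+1) 1 * p (i+1) 1 - p i 1 * p i 1)) := by
        intro i _; ring
      rw [Finset.sum_congr rfl expand]
      simp only [Finset.sum_add_distrib, ← Finset.mul_sum, t1, s11, hsh, sxy]
      simp
      ring
    · have expand : ∀ i ∈ Finset.range n,
        (v0 a + (B a 0 * ((1/2 : ℝ) * (p i 0 + p (i+1) 0)) + B a 1 * ((1/2 : ℝ) * (p i 1 + p (i+1) 1)))) *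
          (-(p (i+1) 0 - p i 0))
        = v0 a * (-(p (i+1) 0 - p i 0))
          + B a 1 * ((1/2 : ℝ) * ((p i 0 * p (i+1) 1 - p (i+1) 0 * p i 1)
              - (p (i+1) 0 * p (i+1) 1 - p i 0 * p i 1)))
          + B a 0 * (-(1/2 : ℝ) * (p (i+1) 0 * p (i+1) 0 - p i 0 * p i 0)) := by
        intro i _; ring
      rw [Finset.sum_congr rfl expand]
      simp only [Finset.sum_add_distrib, ← Finset.mul_sum, Finset.sum_sub_distrib,
        Finset.sum_neg_distrib, t0, s00, hsh, sxy]
      simp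
      ring
  refine ⟨key, fun hA0 => ?_⟩
  rw [key, smul_smul, one_div_mul_cancel hA0, one_smul]
end
end

section
/- Let p_0, p_1, p_2, p_3 ∈ ℝ³, let S_0 = (1/2)(p_2 − p_1) × (p_3 − p_1), S_1 = (1/2)(p_3 − p_0) × (p_2 − p_0), S_2 = (1/2)(p_1 − p_0) × (p_3 − p_0), S_3 = (1/2)(p_2 − p_0) × (p_1 − p_0), and let b_i denote the barycenter of the face opposite p_i (e.g. b_0 = (p_1 + p_2 + p_3)/3). Then ∑_{i=0}^{3} b_i ⊗ S_i = V · I₃, where V = (1/6) ⟨p_1 − p_0, (p_2 − p_0) × (p_3 − p_0)⟩ is the signed volume of the tetrahedron and I₃ is the 3×3 identity matrix. -/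
open scoped BigOperators Matrix

noncomputable section

/-- Outer product `u ⊗ w` of two vectors of `ℝ³`. -/
def outer3 (u w : Fin 3 → ℝ) : Matrix (Fin 3) (Fin 3) ℝ := fun i j => u i * w j

set_option maxHeartbeats 2000000 in
theorem tetrahedron_gradient_reconstruction_consistency (p₀ p₁ p₂ p₃ : Fin 3 → ℝ)
    (S : Fin 4 → Fin 3 → ℝ)
    (hS0 : S 0 = (1 / 2 : ℝ) • ((p₂ - p₁) ⨯₃ (p₃ - p₁)))
    (hS1 : S 1 = (1 / 2 : ℝ) • ((p₃ - p₀) ⨯₃ (p₂ - p₀)))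
    (hS2 : S 2 = (1 / 2 : ℝ) • ((p₁ - p₀) ⨯₃ (p₃ - p₀)))
    (hS3 : S 3 = (1 / 2 : ℝ) • ((p₂ - p₀) ⨯₃ (p₁ - p₀)))
    (b : Fin 4 → Fin 3 → ℝ)
    (hb0 : b 0 = (1 / 3 : ℝ) • (p₁ + p₂ + p₃))
    (hb1 : b 1 = (1 / 3 : ℝ) • (p₀ + p₂ + p₃))
    (hb2 : b 2 = (1 / 3 : ℝ) • (p₀ + p₁ + p₃))
    (hb3 : b 3 = (1 / 3 : ℝ) • (p₀ + p₁ + p₂))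
    (V : ℝ) (hV : V = (1 / 6 : ℝ) * ((p₁ - p₀) ⬝ᵥ ((p₂ - p₀) ⨯₃ (p₃ - p₀)))) :
    (∑ i, outer3 (b i) (S i)) = V • (1 : Matrix (Fin 3) (Fin 3) ℝ) := by
  subst hV
  ext i j
  simp only [Matrix.sum_apply, Fin.sum_univ_four, hS0, hS1, hS2, hS3, hb0, hb1, hb2, hb3,
    outer3, crossProduct, Matrix.smul_apply, Matrix.one_apply, dotProduct,
    Fin.sum_univ_three, LinearMap.mk₂_apply, Pi.smul_apply, Pi.sub_apply, Pi.add_apply,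
    smul_eq_mul, Matrix.cons_val_zero, Matrix.cons_val_one, Matrix.head_cons,
    Matrix.cons_val_two, Matrix.tail_cons]
  fin_cases i <;> fin_cases j <;>
    simp only [show ((⟨2, by norm_num⟩ : Fin 3)) = 2 from rfl,
      show ((⟨1, by norm_num⟩ : Fin 3)) = 1 from rfl,
      show ((⟨0, by norm_num⟩ : Fin 3)) = 0 from rfl,
      Matrix.cons_val_zero, Matrix.cons_val_one, Matrix.head_cons, Matrix.cons_val_two,
      Matrix.tail_cons, Fin.mk_zero, Fin.mk_one, if_true, if_false, Fin.reduceEq, ite_true,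
      ite_false, mul_one, mul_zero] <;> ring
end
end

section
/- Let p_0, p_1, p_2, p_3 ∈ ℝ³ with signed volume V = (1/6) ⟨p_1 − p_0, (p_2 − p_0) × (p_3 − p_0)⟩ ≠ 0, and let S_i and b_i be the face area vectors and face barycenters as above. Then for every affine map v : ℝ³ → ℝ³ with linear part B (i.e. v(x) = v_0 + B x), one has ∑_{i=0}^{3} v(b_i) ⊗ S_i = V · B. Hence the cellwise discrete gradient reconstruction G_c(v) = (1/V) ∑_i v(b_i) ⊗ S_i of the variational discrete element method is exact on affine displacement fields: G_c(v) = B. -/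
open scoped BigOperators Matrix

noncomputable section

set_option maxHeartbeats 2000000
theorem tetrahedron_gradient_reconstruction_exact_on_affine (p₀ p₁ p₂ p₃ : Fin 3 → ℝ)
    (S : Fin 4 → Fin 3 → ℝ)
    (hS0 : S 0 = (1 / 2 : ℝ) • ((p₂ - p₁) ⨯₃ (p₃ - p₁)))
    (hS1 : S 1 = (1 / 2 : ℝ) • ((p₃ - p₀) ⨯₃ (p₂ - p₀)))
    (hS2 : S 2 = (1 / 2 : ℝ) • ((p₁ - p₀) ⨯₃ (p₃ - p₀)))
    (hS3 : S 3 = (1 / 2 : ℝ) • ((p₂ - p₀) ⨯₃ (p₁ - p₀)))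
    (b : Fin 4 → Fin 3 → ℝ)
    (hb0 : b 0 = (1 / 3 : ℝ) • (p₁ + p₂ + p₃))
    (hb1 : b 1 = (1 / 3 : ℝ) • (p₀ + p₂ + p₃))
    (hb2 : b 2 = (1 / 3 : ℝ) • (p₀ + p₁ + p₃))
    (hb3 : b 3 = (1 / 3 : ℝ) • (p₀ + p₁ + p₂))
    (V : ℝ) (hV : V = (1 / 6 : ℝ) * ((p₁ - p₀) ⬝ᵥ ((p₂ - p₀) ⨯₃ (p₃ - p₀))))
    (hV0 : V ≠ 0)
    (v : (Fin 3 → ℝ) → (Fin 3 → ℝ)) (v₀ : Fin 3 → ℝ) (B : Matrix (Fin 3) (Fin 3) ℝ)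
    (hv : ∀ x, v x = v₀ + B.mulVec x) :
    (∑ i, outer3 (v (b i)) (S i)) = V • B ∧
    (1 / V) • (∑ i, outer3 (v (b i)) (S i)) = B := by
  have h : (∑ i, outer3 (v (b i)) (S i)) = V • B := by
    ext i j
    have e : ∀ k, (∑ l, outer3 (v (b l)) (S l)) k j =
        outer3 (v (b 0)) (S 0) k j + outer3 (v (b 1)) (S 1) k j +
        outer3 (v (b 2)) (S 2) k j + outer3 (v (b 3)) (S 3) k j := by
      intro k
      simp [Fin.sum_univ_four]
    rw [e]
    fin_cases i <;> fin_cases j <;>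
      · simp only [Fin.zero_eta, Fin.mk_one, Fin.reduceFinMk, hS0, hS1, hS2, hS3, hb0, hb1, hb2, hb3, hv, hV, outer3,
          Matrix.smul_apply, cross_apply, Matrix.mulVec, dotProduct,
          Pi.add_apply, Pi.sub_apply, Pi.smul_apply, smul_eq_mul, Fin.sum_univ_three,
          Matrix.cons_val_zero, Matrix.cons_val_one, Matrix.head_cons,
          Matrix.cons_val_two, Matrix.tail_cons, Fin.isValue]
        ring
  refine ⟨h, ?_⟩
  rw [h, smul_smul, one_div, inv_mul_cancel₀ hV0, one_smul]
end
end
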